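/- arXiv:1411.4672 — 3 statements merged into one kernel-verified Lean document; each statement's English description precedes it below -/
import Mathlib

section
/- Let C be a coalgebra over a field k and g, h grouplike elements of C. Then: (1) P^0_{g,h}(C) = 0 if g ≠ h, and P^0_{g,g}(C) = k; (2) P^1_{g,h}(C) is isomorphic as a k-vector space to P_{h,g}(C)/k(h−g), where P_{h,g}(C) is the space of (h,g)-primitive elements of C. -/
open TensorProduct

universe u

namespace PrimCohPaper

/-- A bundled `k`-module in universe `u`. -/
structure Mod' (k : Type u) [CommRing k] : Type (u + 1) where
  carrier : Type u
  [isAddCommGroup : AddCommGroup carrier]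
  [isModule : Module k carrier]

attribute [instance] Mod'.isAddCommGroup Mod'.isModule

instance (k : Type u) [CommRing k] : CoeSort (Mod' k) (Type u) :=
  ⟨Mod'.carrier⟩

section Core

variable (k : Type u) [CommRing k] (C : Type u) [AddCommGroup C] [Module k C]

/-- The `n`-th tensor power `C^{⊗ n}` of `C`, bundled. -/
noncomputable def TpowM : ℕ → Mod' k
  | 0 => { carrier := k }
  | n + 1 => { carrier := C ⊗[k] (TpowM n : Type u) }

/-- The `n`-th tensor power `C^{⊗ n}` of `C` (with `Tpow 0 = k` and
`Tpow (n+1) = C ⊗ Tpow n`). -/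
noncomputable abbrev Tpow (n : ℕ) : Type u := (TpowM k C n : Type u)

/-- `x ↦ g ⊗ x`. -/
noncomputable def gLeft (g : C) (n : ℕ) : Tpow k C n →ₗ[k] Tpow k C (n + 1) :=
  TensorProduct.mk k C (Tpow k C n) g

/-- `x ↦ x ⊗ h`. -/
noncomputable def hRight (h : C) : ∀ n : ℕ, Tpow k C n →ₗ[k] Tpow k C (n + 1)
  | 0 => TensorProduct.mk k C k h
  | n + 1 => LinearMap.lTensor C (hRight h n)

variable [Coalgebra k C]

/-- Apply the comultiplication in the leftmost slot. -/
noncomputable def deltaLeft (n : ℕ) : Tpow k C (n + 1) →ₗ[k] Tpow k C (n + 2) :=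
  (TensorProduct.assoc k C C (Tpow k C n)).toLinearMap ∘ₗ
    LinearMap.rTensor (Tpow k C n) (Coalgebra.comul (R := k) (A := C))

/-- The alternating sum `Σ_{i=0}^{n-1} (-1)^i Id^{⊗i} ⊗ Δ ⊗ Id^{⊗(n-i-1)}`
(the Hochschild-type differential `D_n`). -/
noncomputable def Dmap : ∀ n : ℕ, Tpow k C n →ₗ[k] Tpow k C (n + 1)
  | 0 => 0
  | n + 1 =>
    deltaLeft k C n -
      (show Tpow k C (n + 1) →ₗ[k] Tpow k C (n + 2) from LinearMap.lTensor C (Dmap n))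

/-- The cobar-type differential
`∂^n_{g,h} = g ⊗ Id^{⊗n} − D_n + (−1)^{n+1} Id^{⊗n} ⊗ h`
of Stefan–Van Oystaeyen (with `∂^0_{g,h}(1) = g − h`). -/
noncomputable def cobar (g h : C) (n : ℕ) : Tpow k C n →ₗ[k] Tpow k C (n + 1) :=
  gLeft k C g n - Dmap k C n + ((-1 : ℤ) ^ (n + 1)) • hRight k C h n

/-- Cocycles `Z^n_{g,h}(C) = ker ∂^n_{g,h}`. -/
noncomputable def Zc (g h : C) (n : ℕ) : Submodule k (Tpow k C n) :=
  LinearMap.ker (cobar k C g h n)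

/-- Coboundaries `B^n_{g,h}(C) = im ∂^{n-1}_{g,h}` (zero for `n = 0`). -/
noncomputable def Bc (g h : C) : ∀ n : ℕ, Submodule k (Tpow k C n)
  | 0 => ⊥
  | n + 1 => LinearMap.range (cobar k C g h n)

/-- The `n`-th primitive cohomology `𝔓^n_{g,h}(C) = Z^n_{g,h}(C)/B^n_{g,h}(C)`. -/
noncomputable abbrev PrimCoh (g h : C) (n : ℕ) : Type u :=
  Zc k C g h n ⧸ (Bc k C g h n).comap (Zc k C g h n).subtype

/-- A grouplike element of a coalgebra: `Δ(g) = g ⊗ g` and `ε(g) = 1`. -/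
def IsGrouplike (g : C) : Prop :=
  Coalgebra.comul (R := k) g = g ⊗ₜ[k] g ∧ Coalgebra.counit (R := k) g = (1 : k)

/-- The primitive cohomological dimension of a coalgebra: the supremum of all `n` with
`𝔓^n_{g,h}(C) ≠ 0` for some grouplike `g, h` (equal to `⊥ = -∞` if `C` has no grouplike
elements). -/
noncomputable def PCdim : WithBot ℕ∞ :=
  ⨆ (n : ℕ) (g : C) (h : C) (_ : IsGrouplike k C g) (_ : IsGrouplike k C h)
    (_ : Nontrivial (PrimCoh k C g h n)), (n : WithBot ℕ∞)

/-- The identification `C ≃ C^{⊗1}`. -/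
noncomputable def t1equiv : C ≃ₗ[k] Tpow k C 1 :=
  (TensorProduct.rid k C).symm

/-- The identification `C ⊗ C ≃ C^{⊗2}`. -/
noncomputable def t2equiv : (C ⊗[k] C) ≃ₗ[k] Tpow k C 2 :=
  TensorProduct.congr (LinearEquiv.refl k C) (t1equiv k C)

end Core

/-- The space `P_{h,g}(C)` of `(h,g)`-primitive elements: `x` with `Δ(x) = x ⊗ h + g ⊗ x`. -/
noncomputable def skewPrim (k : Type u) [Field k] (C : Type u) [AddCommGroup C] [Module k C]
    [Coalgebra k C] (h g : C) : Submodule k C :=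
  LinearMap.ker
    (Coalgebra.comul (R := k) (A := C) -
      (((TensorProduct.mk k C C).flip h) + TensorProduct.mk k C C g))


section Aux

variable (k : Type u) [Field k] (C : Type u) [AddCommGroup C] [Module k C] [Coalgebra k C]

/-- The map whose kernel is `skewPrim k C h g`. -/
noncomputable def Dprim (g h : C) : C →ₗ[k] C ⊗[k] C :=
  Coalgebra.comul (R := k) (A := C) -
    (((TensorProduct.mk k C C).flip h) + TensorProduct.mk k C C g)

lemma skewPrim_eq_ker (g h : C) : skewPrim k C h g = LinearMap.ker (Dprim k C g h) := rfl

lemma t1equiv_apply (c : C) : t1equiv k C c = c ⊗ₜ[k] (1 : k) :=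
  TensorProduct.rid_symm_apply c

lemma t1equiv_symm_apply (c : C) (x : k) :
    (t1equiv k C).symm (c ⊗ₜ[k] x) = x • c := by
  show (TensorProduct.rid k C) (c ⊗ₜ[k] x) = x • c
  exact TensorProduct.rid_tmul c x

lemma t2equiv_tmul (a b : C) :
    t2equiv k C (a ⊗ₜ[k] b) = a ⊗ₜ[k] (b ⊗ₜ[k] (1 : k)) := by
  show TensorProduct.congr (LinearEquiv.refl k C) (t1equiv k C) (a ⊗ₜ[k] b) = _
  rw [TensorProduct.congr_tmul, LinearEquiv.refl_apply, t1equiv_apply]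
  rfl

lemma cobar_zero_apply (g h : C) (x : k) :
    cobar k C g h 0 x = (t1equiv k C) (x • (g - h)) := by
  have h0 : cobar k C g h 0 x
      = gLeft k C g 0 x - Dmap k C 0 x + ((-1 : ℤ) ^ (0 + 1)) • (hRight k C h 0 x) := rfl
  rw [h0]
  have h1 : Dmap k C 0 x = 0 := rfl
  rw [h1, sub_zero, pow_one, neg_one_zsmul]
  show g ⊗ₜ[k] x + -(h ⊗ₜ[k] x) = (t1equiv k C) (x • (g - h))
  rw [t1equiv_apply]
  show g ⊗ₜ[k] x + -(h ⊗ₜ[k] x) = (x • (g - h)) ⊗ₜ[k] (1 : k)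
  rw [TensorProduct.smul_tmul, smul_eq_mul, mul_one, TensorProduct.sub_tmul,
    sub_eq_add_neg]

lemma cobar_zero_eq (g h : C) :
    cobar k C g h 0 =
      (t1equiv k C).toLinearMap ∘ₗ LinearMap.toSpanSingleton k C (g - h) := by
  apply LinearMap.ext_ring
  refine (cobar_zero_apply k C g h 1).trans ?_
  show (t1equiv k C) ((1 : k) • (g - h))
      = (t1equiv k C) (LinearMap.toSpanSingleton k C (g - h) 1)
  rw [LinearMap.toSpanSingleton_apply]

lemma assoc_tmul_one' (y : C ⊗[k] C) :
    (TensorProduct.assoc k C C k) (y ⊗ₜ[k] (1 : k)) = t2equiv k C y := by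
  induction y using TensorProduct.induction_on with
  | zero => simp; rfl
  | tmul a b =>
      rw [TensorProduct.assoc_tmul, t2equiv_tmul]
  | add y1 y2 h1 h2 =>
      rw [TensorProduct.add_tmul, map_add, map_add, h1, h2]
      rfl

lemma cobar_one_apply (g h : C) (c : C) (x : k) :
    cobar k C g h 1 (c ⊗ₜ[k] x)
      = g ⊗ₜ[k] (c ⊗ₜ[k] x) - (TensorProduct.assoc k C C k)
          ((Coalgebra.comul (R := k) c) ⊗ₜ[k] x) + c ⊗ₜ[k] (h ⊗ₜ[k] x) := by
  have h0 : cobar k C g h 1 (c ⊗ₜ[k] x)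
      = gLeft k C g 1 (c ⊗ₜ[k] x) - Dmap k C 1 (c ⊗ₜ[k] x)
        + ((-1 : ℤ) ^ (1 + 1)) • (hRight k C h 1 (c ⊗ₜ[k] x)) := rfl
  rw [h0]
  have hsign : ((-1 : ℤ) ^ (1 + 1)) = (1 : ℤ) := by norm_num
  rw [hsign, one_zsmul]
  have hg : gLeft k C g 1 (c ⊗ₜ[k] x) = g ⊗ₜ[k] (c ⊗ₜ[k] x) := rfl
  have hh' : hRight k C h 1 (c ⊗ₜ[k] x) = c ⊗ₜ[k] (h ⊗ₜ[k] x) := rfl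
  have hD : Dmap k C 1 (c ⊗ₜ[k] x)
      = (TensorProduct.assoc k C C k) ((Coalgebra.comul (R := k) c) ⊗ₜ[k] x) := by
    have h1 : Dmap k C 1 = deltaLeft k C 0 -
        (show Tpow k C 1 →ₗ[k] Tpow k C 2 from LinearMap.lTensor C (Dmap k C 0)) := rfl
    have h2 : Dmap k C 0 = 0 := rfl
    rw [h1]
    show @HSub.hSub (Tpow k C 2) (Tpow k C 2) (Tpow k C 2) _ (deltaLeft k C 0 (c ⊗ₜ[k] x))
      (LinearMap.lTensor C (Dmap k C 0) (c ⊗ₜ[k] x)) = _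
    rw [h2, LinearMap.lTensor_zero, LinearMap.zero_apply]
    erw [sub_zero]
    rfl
  rw [hg, hh', hD]
  rfl

lemma neg_Dprim_apply (g h : C) (c : C) :
    t2equiv k C ((- Dprim k C g h) c)
      = t2equiv k C (g ⊗ₜ[k] c) - t2equiv k C (Coalgebra.comul (R := k) c)
        + t2equiv k C (c ⊗ₜ[k] h) := by
  rw [← map_sub, ← map_add]
  congr 1
  simp only [Dprim, LinearMap.neg_apply, LinearMap.sub_apply, LinearMap.add_apply,
    TensorProduct.mk_apply, LinearMap.flip_apply, neg_sub]
  abel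

lemma cobar_one_eq (g h : C) :
    cobar k C g h 1 =
      (t2equiv k C).toLinearMap ∘ₗ (- Dprim k C g h) ∘ₗ
        ((t1equiv k C).symm : Tpow k C 1 →ₗ[k] C) := by
  have hcomp : ∀ F G : Tpow k C 1 →ₗ[k] Tpow k C 2,
      F ∘ₗ ((t1equiv k C) : C →ₗ[k] Tpow k C 1)
        = G ∘ₗ ((t1equiv k C) : C →ₗ[k] Tpow k C 1) → F = G := by
    intro F G hFG
    apply LinearMap.ext
    intro z
    have h1 := LinearMap.congr_fun hFG ((t1equiv k C).symm z)
    simpa only [LinearMap.comp_apply, LinearEquiv.coe_coe,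
      LinearEquiv.apply_symm_apply] using h1
  apply hcomp
  apply LinearMap.ext
  intro c
  show cobar k C g h 1 (t1equiv k C c)
      = t2equiv k C ((- Dprim k C g h) ((t1equiv k C).symm (t1equiv k C c)))
  rw [LinearEquiv.symm_apply_apply,
    show t1equiv k C c = (c ⊗ₜ[k] (1 : k) : Tpow k C 1) from t1equiv_apply k C c,
    cobar_one_apply, assoc_tmul_one',
    neg_Dprim_apply, t2equiv_tmul, t2equiv_tmul]
  rfl

lemma Zc_one (g h : C) :
    Zc k C g h 1 = (skewPrim k C h g).map ((t1equiv k C) : C →ₗ[k] Tpow k C 1) := by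
  ext z
  rw [Zc, LinearMap.mem_ker, cobar_one_eq, skewPrim_eq_ker, Submodule.mem_map_equiv]
  simp only [LinearMap.comp_apply, LinearEquiv.coe_coe, LinearMap.neg_apply,
    LinearEquiv.map_eq_zero_iff, neg_eq_zero, LinearMap.mem_ker]

lemma Bc_one (g h : C) :
    Bc k C g h 1 = (Submodule.span k {h - g}).map ((t1equiv k C) : C →ₗ[k] Tpow k C 1) := by
  show LinearMap.range (cobar k C g h 0) = _
  rw [cobar_zero_eq]
  erw [LinearMap.range_comp]
  erw [← LinearMap.span_singleton_eq_range]
  have : (Submodule.span k {h - g} : Submodule k C) = Submodule.span k {g - h} := by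
    rw [show ({h - g} : Set C) = -{g - h} by rw [Set.neg_singleton]; rw [neg_sub],
      Submodule.span_neg]
  rw [this]

/-- Transport a quotient of submodules along equalities of submodules. -/
noncomputable def quotCongrAux {M : Type u} [AddCommGroup M] [Module k M]
    (p p' q q' : Submodule k M) (hp : p = p') (hq : q = q') :
    (p ⧸ q.comap p.subtype) ≃ₗ[k] (p' ⧸ q'.comap p'.subtype) := by
  subst hp; subst hq; exact LinearEquiv.refl _ _

noncomputable def quotEquivAux {M N : Type u} [AddCommGroup M] [Module k M] [AddCommGroup N] [Module k N]
    (e : M ≃ₗ[k] N) (p q : Submodule k M) :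
    (p ⧸ q.comap p.subtype) ≃ₗ[k]
      ((p.map (e : M →ₗ[k] N)) ⧸
        ((q.map (e : M →ₗ[k] N)).comap (p.map (e : M →ₗ[k] N)).subtype)) := by
  refine Submodule.Quotient.equiv _ _ (e.submoduleMap p) ?_
  ext ⟨y, hy⟩
  simp only [Submodule.mem_map, Submodule.mem_comap, Submodule.subtype_apply]
  constructor
  · rintro ⟨⟨x, hxp⟩, hxq, hxy⟩
    refine ⟨x, hxq, ?_⟩
    have := congrArg Subtype.val hxy
    simpa [LinearEquiv.submoduleMap_apply] using this
  · rintro ⟨x, hxq, hxy⟩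
    obtain ⟨x', hx'p, hx'y⟩ := hy
    have hxx' : x = x' := e.injective (hxy.trans hx'y.symm)
    refine ⟨⟨x, hxx' ▸ hx'p⟩, hxq, ?_⟩
    apply Subtype.ext
    simpa [LinearEquiv.submoduleMap_apply] using hxy

end Aux

/-- **Statement 6** (Lemma 2.1(1),(2)).
Let `C` be a coalgebra over a field `k` and `g, h` grouplike. Then:
(1) `𝔓^0_{g,h}(C) = 0` if `g ≠ h`, and `𝔓^0_{g,g}(C) = k`;
(2) `𝔓^1_{g,h}(C) ≅ P_{h,g}(C)/k(h−g)`. -/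
theorem primCoh_low_degree
    (k : Type u) [Field k] (C : Type u) [AddCommGroup C] [Module k C] [Coalgebra k C]
    (g h : C) (hg : IsGrouplike k C g) (hh : IsGrouplike k C h) :
    (g ≠ h → Subsingleton (PrimCoh k C g h 0)) ∧
    Nonempty ((PrimCoh k C g g 0) ≃ₗ[k] k) ∧
    Nonempty ((PrimCoh k C g h 1) ≃ₗ[k]
      (skewPrim k C h g ⧸
        (Submodule.span k {h - g}).comap (skewPrim k C h g).subtype)) := by
  refine ⟨?_, ⟨?_⟩, ⟨?_⟩⟩
  · intro hne
    have hZ : Zc k C g h 0 = ⊥ := by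
      ext x
      rw [Zc]
      show cobar k C g h 0 x = 0 ↔ x = 0
      rw [cobar_zero_apply,
        LinearEquiv.map_eq_zero_iff, smul_eq_zero, sub_eq_zero]
      simp [hne]
    rw [show PrimCoh k C g h 0
        = (Zc k C g h 0 ⧸ (Bc k C g h 0).comap (Zc k C g h 0).subtype) from rfl, hZ]
    exact (Submodule.Quotient.mk_surjective _).subsingleton
  · have hZ : Zc k C g g 0 = ⊤ := by
      ext x
      rw [Zc]
      show cobar k C g g 0 x = 0 ↔ x ∈ (⊤ : Submodule k (Tpow k C 0))
      rw [cobar_zero_apply]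
      simp
      trivial
    have hB : (Bc k C g g 0).comap (Zc k C g g 0).subtype = ⊥ := by
      show (⊥ : Submodule k (Tpow k C 0)).comap (Zc k C g g 0).subtype = ⊥
      rw [Submodule.comap_bot, Submodule.ker_subtype]
    exact (Submodule.quotEquivOfEqBot _ hB).trans
      ((LinearEquiv.ofEq _ _ hZ).trans (Submodule.topEquiv))
  · have hZ : Zc k C g h 1
        = (skewPrim k C h g).map ((t1equiv k C) : C →ₗ[k] Tpow k C 1) := Zc_one k C g h
    have hB : Bc k C g h 1
        = (Submodule.span k {h - g}).map ((t1equiv k C) : C →ₗ[k] Tpow k C 1) :=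
      Bc_one k C g h
    exact (quotCongrAux k _ _ _ _ hZ hB).trans
      (quotEquivAux k (t1equiv k C) (skewPrim k C h g) (Submodule.span k {h - g})).symm


end PrimCohPaper
end

section
/- Let C be a subcoalgebra of a coalgebra D over a field k, let g, h be grouplike elements of C, and let v ∈ D satisfy Δ(v) = v ⊗ h + g ⊗ v + w with w ∈ C ⊗ C. Then: (1) w ∈ Z^2_{g,h}(C); (2) w ∈ B^2_{g,h}(C) if and only if there exists f ∈ C such that v − f is an (h,g)-primitive element of D; (3) if P^2_{g,h}(C) = 0, then there exists f ∈ C such that v − f is (h,g)-primitive. -/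
open TensorProduct

universe u

namespace PrimCohPaper

section Probe
variable (k : Type u) [CommRing k] (C : Type u) [AddCommGroup C] [Module k C] [Coalgebra k C]

noncomputable def d1 (g h : C) : C →ₗ[k] C ⊗[k] C :=
  TensorProduct.mk k C C g - Coalgebra.comul + (TensorProduct.mk k C C).flip h

noncomputable def d2 (g h : C) : (C ⊗[k] C) →ₗ[k] C ⊗[k] (C ⊗[k] C) :=
  TensorProduct.mk k C (C ⊗[k] C) g
    - (TensorProduct.assoc k C C C).toLinearMap ∘ₗ
        LinearMap.rTensor C (Coalgebra.comul (R := k) (A := C))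
    + LinearMap.lTensor C (Coalgebra.comul (R := k) (A := C))
    - LinearMap.lTensor C ((TensorProduct.mk k C C).flip h)

noncomputable def t3equiv : (C ⊗[k] (C ⊗[k] C)) ≃ₗ[k] Tpow k C 3 :=
  TensorProduct.congr (LinearEquiv.refl k C) (t2equiv k C)

theorem hB0 (u : C ⊗[k] C) :
    (TensorProduct.assoc k C C (Tpow k C 0)) (u ⊗ₜ[k] (1 : k)) = t2equiv k C u := by
  induction u using TensorProduct.induction_on with
  | zero => rw [map_zero]; exact (congrArg _ (TensorProduct.zero_tmul _ _)).trans (map_zero _)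
  | tmul a b => rfl
  | add a b ha hb =>
    exact (congrArg _ (TensorProduct.add_tmul _ _ _)).trans ((map_add _ _ _).trans (by rw [map_add, ha, hb]; rfl))

theorem dL0 (y : C) :
    deltaLeft k C 0 (t1equiv k C y) = t2equiv k C (Coalgebra.comul y) := by
  show (TensorProduct.assoc k C C (Tpow k C 0))
      (LinearMap.rTensor (Tpow k C 0) Coalgebra.comul (y ⊗ₜ[k] (1:k))) = _
  exact (congrArg _ (LinearMap.rTensor_tmul _ _ _ _)).trans (hB0 k C _)

theorem lem1 (g h : C) (x : C) :
    cobar k C g h 1 (t1equiv k C x) = t2equiv k C (d1 k C g h x) := by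
  rw [cobar]
  simp only [Dmap, LinearMap.lTensor_zero, sub_zero, LinearMap.add_apply,
    LinearMap.sub_apply, LinearMap.smul_apply]
  erw [sub_zero, dL0]
  have h1 : gLeft k C g 1 (t1equiv k C x) = t2equiv k C (g ⊗ₜ[k] x) := rfl
  have h3 : hRight k C h 1 (t1equiv k C x) = t2equiv k C (x ⊗ₜ[k] h) := rfl
  rw [h1, h3, d1]
  simp only [LinearMap.add_apply, LinearMap.sub_apply, map_sub, map_add]
  norm_num

theorem hB2 (y : C) (u : C ⊗[k] C) :
    (TensorProduct.assoc k C C (Tpow k C 1)) (u ⊗ₜ[k] (t1equiv k C y)) =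
      t3equiv k C ((TensorProduct.assoc k C C C) (u ⊗ₜ[k] y)) := by
  induction u using TensorProduct.induction_on with
  | zero => simp; rfl
  | tmul a b => rfl
  | add a b ha hb => rw [add_tmul, map_add, add_tmul, map_add, map_add, ha, hb]; rfl

theorem lem2 (g h : C) (z : C ⊗[k] C) :
    cobar k C g h 2 (t2equiv k C z) = t3equiv k C (d2 k C g h z) := by
  have key : (cobar k C g h 2) ∘ₗ (t2equiv k C).toLinearMap
      = (t3equiv k C).toLinearMap ∘ₗ d2 k C g h := by
    apply TensorProduct.ext'
    intro x y
    simp only [LinearMap.comp_apply, LinearEquiv.coe_coe]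
    rw [cobar]
    simp only [Dmap, LinearMap.lTensor_zero, sub_zero, LinearMap.add_apply,
      LinearMap.sub_apply, LinearMap.smul_apply]
    have hg : gLeft k C g 2 (t2equiv k C (x ⊗ₜ[k] y))
        = t3equiv k C (g ⊗ₜ[k] (x ⊗ₜ[k] y)) := rfl
    have hd1 : deltaLeft k C 1 (t2equiv k C (x ⊗ₜ[k] y))
        = t3equiv k C ((TensorProduct.assoc k C C C)
            ((Coalgebra.comul x) ⊗ₜ[k] y)) := by
      show (TensorProduct.assoc k C C (Tpow k C 1))
          (LinearMap.rTensor (Tpow k C 1) Coalgebra.comul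
            (x ⊗ₜ[k] (t1equiv k C y))) = _
      rw [LinearMap.rTensor_tmul, hB2]
    have hd0 : (LinearMap.lTensor (N := (TpowM k C 1).carrier) (P := (TpowM k C (1+1)).carrier) C
          (deltaLeft k C 0)) (t2equiv k C (x ⊗ₜ[k] y))
        = t3equiv k C (x ⊗ₜ[k] (Coalgebra.comul y)) := by
      rw [show (LinearMap.lTensor (N := (TpowM k C 1).carrier) (P := (TpowM k C (1+1)).carrier) C
            (deltaLeft k C 0)) (t2equiv k C (x ⊗ₜ[k] y))
          = x ⊗ₜ[k] (deltaLeft k C 0 (t1equiv k C y)) from rfl, dL0]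
      rfl
    have hh : hRight k C h 2 (t2equiv k C (x ⊗ₜ[k] y))
        = t3equiv k C (x ⊗ₜ[k] (y ⊗ₜ[k] h)) := rfl
    erw [sub_zero, LinearMap.sub_apply, hd0]
    rw [hg, hd1, hh, d2]
    simp only [LinearMap.add_apply, LinearMap.sub_apply, LinearMap.comp_apply,
      LinearEquiv.coe_coe, map_sub, map_add, LinearMap.lTensor_tmul,
      TensorProduct.mk_apply, LinearMap.flip_apply, LinearMap.rTensor_tmul]
    norm_num
    abel
  exact LinearMap.congr_fun key z

theorem helperN {D : Type u} [AddCommGroup D] [Module k D]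
    (φ : C →ₗ[k] D) (y : C) (u : C ⊗[k] C) :
    TensorProduct.map φ (TensorProduct.map φ φ)
        ((TensorProduct.assoc k C C C) (u ⊗ₜ[k] y))
      = (TensorProduct.assoc k D D D)
          ((TensorProduct.map φ φ u) ⊗ₜ[k] (φ y)) := by
  induction u using TensorProduct.induction_on with
  | zero => simp
  | tmul a b => simp
  | add a b ha hb => simp only [add_tmul, map_add, ha, hb]

theorem nat2 {D : Type u} [AddCommGroup D] [Module k D] [Coalgebra k D]
    (φ : C →ₗc[k] D) (g h : C) (z : C ⊗[k] C) :
    TensorProduct.map φ.toLinearMap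
        (TensorProduct.map φ.toLinearMap φ.toLinearMap) (d2 k C g h z)
      = d2 k D (φ g) (φ h)
          (TensorProduct.map φ.toLinearMap φ.toLinearMap z) := by
  have key : TensorProduct.map φ.toLinearMap
        (TensorProduct.map φ.toLinearMap φ.toLinearMap) ∘ₗ d2 k C g h
      = d2 k D (φ g) (φ h) ∘ₗ
          TensorProduct.map φ.toLinearMap φ.toLinearMap := by
    apply TensorProduct.ext'
    intro x y
    simp only [LinearMap.comp_apply, d2, LinearMap.sub_apply, LinearMap.add_apply,
      TensorProduct.mk_apply, LinearMap.lTensor_tmul, TensorProduct.map_tmul,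
      LinearMap.flip_apply, LinearEquiv.coe_coe, LinearMap.rTensor_tmul,
      map_sub, map_add]
    rw [helperN]
    have hc : ∀ a : C, TensorProduct.map φ.toLinearMap φ.toLinearMap
        (Coalgebra.comul a) = Coalgebra.comul (φ a) := fun a => by
      simpa using CoalgHomClass.map_comp_comul_apply φ a
    simp [hc]
  exact LinearMap.congr_fun key z

theorem helperA (A M : Type u) [AddCommGroup A] [Module k A]
    [AddCommGroup M] [Module k M] (m : M) (z : A ⊗[k] A) :
    (TensorProduct.assoc k A A M) (z ⊗ₜ[k] m) =
      LinearMap.lTensor A ((TensorProduct.mk k A M).flip m) z := by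
  induction z using TensorProduct.induction_on with
  | zero => simp
  | tmul a b => simp
  | add a b ha hb => simp [add_tmul, ha, hb]

theorem cocycle_aux {D : Type u} [AddCommGroup D] [Module k D] [Coalgebra k D]
    (g' h' v : D) (W : D ⊗[k] D)
    (hg' : Coalgebra.comul g' = g' ⊗ₜ[k] g')
    (hh' : Coalgebra.comul h' = h' ⊗ₜ[k] h')
    (hv : Coalgebra.comul v = v ⊗ₜ[k] h' + g' ⊗ₜ[k] v + W) :
    d2 k D g' h' W = 0 := by
  have key := Coalgebra.coassoc_apply (R := k) v
  rw [hv] at key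
  simp only [map_add, LinearMap.rTensor_tmul, LinearMap.lTensor_tmul, hv, hg', hh',
    TensorProduct.add_tmul, TensorProduct.tmul_add, TensorProduct.assoc_tmul,
    helperA, LinearMap.flip_apply, TensorProduct.mk_apply] at key
  simp only [d2, LinearMap.sub_apply, LinearMap.add_apply, LinearMap.comp_apply,
    TensorProduct.mk_apply, LinearEquiv.coe_coe]
  rw [eq_comm, ← sub_eq_zero] at key
  rw [← key]
  abel

end Probe

section Main

variable (k : Type u) [Field k] (C D : Type u)
  [AddCommGroup C] [Module k C] [Coalgebra k C]
  [AddCommGroup D] [Module k D] [Coalgebra k D]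

theorem mapII_injective (φ : C →ₗ[k] D) (hφ : Function.Injective φ) :
    Function.Injective (TensorProduct.map φ φ) := by
  rw [← LinearMap.lTensor_comp_rTensor, LinearMap.coe_comp]
  exact (Module.Flat.lTensor_preserves_injective_linearMap φ hφ).comp
    (Module.Flat.rTensor_preserves_injective_linearMap φ hφ)

theorem mapIII_injective (φ : C →ₗ[k] D) (hφ : Function.Injective φ) :
    Function.Injective (TensorProduct.map φ (TensorProduct.map φ φ)) := by
  rw [← LinearMap.lTensor_comp_rTensor, LinearMap.coe_comp]
  exact (Module.Flat.lTensor_preserves_injective_linearMap _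
      (mapII_injective k C D φ hφ)).comp
    (Module.Flat.rTensor_preserves_injective_linearMap φ hφ)


end Main

/-- **Statement 8** (Lemma 2.3).
Let `ι : C → D` be an injective coalgebra map (so `C` is a subcoalgebra of `D`), let
`g, h` be grouplike elements of `C`, and let `v ∈ D` satisfy
`Δ(v) = v ⊗ h + g ⊗ v + w` with `w ∈ C ⊗ C`. Then:
(1) `w ∈ Z²_{g,h}(C)`;
(2) `w ∈ B²_{g,h}(C)` iff there is `f ∈ C` with `v − f` an `(h,g)`-primitive element of `D`;
(3) if `𝔓²_{g,h}(C) = 0` then there is `f ∈ C` with `v − f` an `(h,g)`-primitive. -/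
theorem subcoalgebra_two_cocycle
    (k : Type u) [Field k] (C D : Type u)
    [AddCommGroup C] [Module k C] [Coalgebra k C]
    [AddCommGroup D] [Module k D] [Coalgebra k D]
    (ι : C →ₗc[k] D) (hι : Function.Injective ι)
    (g h : C) (hg : IsGrouplike k C g) (hh : IsGrouplike k C h)
    (v : D) (w : C ⊗[k] C)
    (hv : Coalgebra.comul (R := k) v =
      v ⊗ₜ[k] ι h + (ι g) ⊗ₜ[k] v + TensorProduct.map ι.toLinearMap ι.toLinearMap w) :
    (t2equiv k C w ∈ Zc k C g h 2) ∧
    (t2equiv k C w ∈ Bc k C g h 2 ↔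
      ∃ f : C, Coalgebra.comul (R := k) (v - ι f) =
        (v - ι f) ⊗ₜ[k] ι h + (ι g) ⊗ₜ[k] (v - ι f)) ∧
    (Subsingleton (PrimCoh k C g h 2) →
      ∃ f : C, Coalgebra.comul (R := k) (v - ι f) =
        (v - ι f) ⊗ₜ[k] ι h + (ι g) ⊗ₜ[k] (v - ι f)) := by
  have hιl : Function.Injective ι.toLinearMap := hι
  have hc : ∀ a : C, TensorProduct.map ι.toLinearMap ι.toLinearMap
      (Coalgebra.comul a) = Coalgebra.comul (ι a) := fun a => by
    simpa using CoalgHomClass.map_comp_comul_apply ι a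
  have hg' : Coalgebra.comul (R := k) (ι g) = ι g ⊗ₜ[k] ι g := by
    rw [← hc, hg.1]; simp
  have hh' : Coalgebra.comul (R := k) (ι h) = ι h ⊗ₜ[k] ι h := by
    rw [← hc, hh.1]; simp
  have hinj2 := mapII_injective k C D ι.toLinearMap hιl
  have hinj3 := mapIII_injective k C D ι.toLinearMap hιl
  -- (1) the cocycle condition
  have hw0 : d2 k C g h w = 0 := by
    apply hinj3
    rw [map_zero, nat2 k C ι g h w]
    have := cocycle_aux k (ι g) (ι h) v
      (TensorProduct.map ι.toLinearMap ι.toLinearMap w) hg' hh' hv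
    simpa using this
  have hZ : t2equiv k C w ∈ Zc k C g h 2 := by
    show cobar k C g h 2 (t2equiv k C w) = 0
    rw [lem2, hw0, map_zero]
  -- (2) the iff
  have hBceq : Bc k C g h 2 = LinearMap.range (cobar k C g h 1) := rfl
  have hIff : t2equiv k C w ∈ Bc k C g h 2 ↔
      ∃ f : C, Coalgebra.comul (R := k) (v - ι f) =
        (v - ι f) ⊗ₜ[k] ι h + (ι g) ⊗ₜ[k] (v - ι f) := by
    constructor
    · intro hB
      rw [hBceq, LinearMap.mem_range] at hB
      obtain ⟨y, hy⟩ := hB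
      set f := (t1equiv k C).symm y with hfdef
      have hyf : y = t1equiv k C f := by rw [hfdef, LinearEquiv.apply_symm_apply]
      rw [hyf, lem1] at hy
      have hw : d1 k C g h f = w := (t2equiv k C).injective hy
      refine ⟨-f, ?_⟩
      rw [map_neg, sub_neg_eq_add]
      have hwf : w = g ⊗ₜ[k] f - Coalgebra.comul f + f ⊗ₜ[k] h := by
        rw [← hw]; simp [d1]
      rw [map_add, hv, hwf, ← hc]
      simp only [map_add, map_sub, TensorProduct.map_tmul, TensorProduct.add_tmul,
        TensorProduct.tmul_add]
      simp only [show ∀ a : C, ι.toLinearMap a = ι a from fun _ => rfl]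
      abel
    · rintro ⟨f, hf⟩
      rw [hBceq, LinearMap.mem_range]
      refine ⟨t1equiv k C (-f), ?_⟩
      rw [lem1]
      congr 1
      apply hinj2
      have hd1 : TensorProduct.map ι.toLinearMap ι.toLinearMap (d1 k C g h (-f))
          = Coalgebra.comul (ι f) - ι g ⊗ₜ[k] ι f - ι f ⊗ₜ[k] ι h := by
        have : d1 k C g h (-f)
            = Coalgebra.comul f - g ⊗ₜ[k] f - f ⊗ₜ[k] h := by
          simp [d1, TensorProduct.tmul_neg, TensorProduct.neg_tmul]; abel
        rw [this]
        simp only [map_sub, TensorProduct.map_tmul, hc]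
        rfl
      rw [hd1]
      rw [map_sub, hv, ← hc] at hf
      rw [eq_comm, ← sub_eq_zero] at hf
      rw [← sub_eq_zero, ← hf]
      simp only [TensorProduct.sub_tmul, TensorProduct.tmul_sub, hc,
        show ∀ a : C, ι.toLinearMap a = ι a from fun _ => rfl]
      abel
  refine ⟨hZ, hIff, fun hsub => ?_⟩
  have htop : (Bc k C g h 2).comap (Zc k C g h 2).subtype = ⊤ :=
    Submodule.Quotient.subsingleton_iff.mp hsub
  have hmem : (⟨t2equiv k C w, hZ⟩ : Zc k C g h 2) ∈
      (Bc k C g h 2).comap (Zc k C g h 2).subtype := by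
    rw [htop]; trivial
  exact hIff.mp (Submodule.mem_comap.mp hmem)

end PrimCohPaper
end

section
/- Let H be a Hopf algebra over a field k and let h_1, h_2, g be grouplike elements of H. Then the k-linear map S^n_g : H^{⊗n} → H^{⊗n} defined by f ↦ (g ⊗ g ⊗ ⋯ ⊗ g)·f (left multiplication by g^{⊗n}) commutes with the differentials and induces an isomorphism of k-vector spaces P^n_{h_1,h_2}(H) ≅ P^n_{g h_1, g h_2}(H) for every n ≥ 0. -/
open TensorProduct

universe u

namespace PrimCohPaper

section Translation

variable (k : Type u) [Field k] (H : Type u) [Ring H] [HopfAlgebra k H]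

/-- Left multiplication by `g ⊗ g ⊗ ⋯ ⊗ g` on `H^{⊗n}`. -/
noncomputable def smulTpow (g : H) : ∀ n : ℕ, Tpow k H n →ₗ[k] Tpow k H n
  | 0 => LinearMap.id
  | n + 1 => TensorProduct.map (LinearMap.mulLeft k g) (smulTpow g n)


lemma smulTpow_gLeft (g a : H) (n : ℕ) :
    smulTpow k H g (n + 1) ∘ₗ gLeft k H a n = gLeft k H (g * a) n ∘ₗ smulTpow k H g n := by
  ext x
  rfl

lemma smulTpow_hRight (g a : H) : ∀ n : ℕ,
    smulTpow k H g (n + 1) ∘ₗ hRight k H a n = hRight k H (g * a) n ∘ₗ smulTpow k H g n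
  | 0 => by
    ext
    rfl
  | n + 1 => by
    have ih := smulTpow_hRight g a n
    refine TensorProduct.ext' fun b x => ?_
    have := LinearMap.congr_fun ih x
    simp only [LinearMap.comp_apply] at this
    show (g * b) ⊗ₜ[k] (smulTpow k H g (n + 1)) ((hRight k H a n) x) =
      (g * b) ⊗ₜ[k] (hRight k H (g * a) n) ((smulTpow k H g n) x)
    rw [this]

lemma smul_assoc_aux (g : H) (n : ℕ) (u : H ⊗[k] H) (x : Tpow k H n) :
    smulTpow k H g (n + 2) ((TensorProduct.assoc k H H (Tpow k H n)) (u ⊗ₜ x)) =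
      (TensorProduct.assoc k H H (Tpow k H n))
        ((((g ⊗ₜ[k] g) * u) : H ⊗[k] H) ⊗ₜ smulTpow k H g n x) := by
  induction u using TensorProduct.induction_on with
  | zero => simp; exact map_zero _
  | tmul b c =>
    simp only [TensorProduct.assoc_tmul, Algebra.TensorProduct.tmul_mul_tmul]
    rfl
  | add u v hu hv =>
    simp only [TensorProduct.add_tmul, map_add, mul_add, hu, hv]
    exact (map_add (smulTpow k H g (n + 2)) _ _).trans (congrArg₂ (· + ·) hu hv)

lemma smulTpow_deltaLeft (g : H) (hg : IsGrouplike k H g) (n : ℕ) :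
    smulTpow k H g (n + 2) ∘ₗ deltaLeft k H n = deltaLeft k H n ∘ₗ smulTpow k H g (n + 1) := by
  refine TensorProduct.ext' fun a x => ?_
  have h1 : Coalgebra.comul (R := k) (g * a) = (g ⊗ₜ[k] g) * Coalgebra.comul a := by
    rw [Bialgebra.comul_mul, hg.1]
  show smulTpow k H g (n + 2)
      ((TensorProduct.assoc k H H (Tpow k H n)) ((Coalgebra.comul (R := k) a) ⊗ₜ x)) =
    (TensorProduct.assoc k H H (Tpow k H n))
      ((Coalgebra.comul (R := k) (g * a)) ⊗ₜ smulTpow k H g n x)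
  rw [h1, smul_assoc_aux]

lemma smulTpow_Dmap (g : H) (hg : IsGrouplike k H g) : ∀ n : ℕ,
    smulTpow k H g (n + 1) ∘ₗ Dmap k H n = Dmap k H n ∘ₗ smulTpow k H g n
  | 0 => by
    simp [Dmap]
  | n + 1 => by
    have ih := smulTpow_Dmap g hg n
    have hl : smulTpow k H g (n + 2) ∘ₗ
        (show Tpow k H (n + 1) →ₗ[k] Tpow k H (n + 2) from LinearMap.lTensor H (Dmap k H n)) =
        (show Tpow k H (n + 1) →ₗ[k] Tpow k H (n + 2) from LinearMap.lTensor H (Dmap k H n)) ∘ₗ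
          smulTpow k H g (n + 1) := by
      refine TensorProduct.ext' fun a x => ?_
      have := LinearMap.congr_fun ih x
      simp only [LinearMap.comp_apply] at this
      show (g * a) ⊗ₜ[k] (smulTpow k H g (n + 1)) ((Dmap k H n) x) =
        (g * a) ⊗ₜ[k] (Dmap k H n) ((smulTpow k H g n) x)
      rw [this]
    show smulTpow k H g (n + 2) ∘ₗ (deltaLeft k H n - _) = (deltaLeft k H n - _) ∘ₗ _
    rw [LinearMap.comp_sub, LinearMap.sub_comp, smulTpow_deltaLeft k H g hg n, hl]

lemma smulTpow_cobar (h₁ h₂ g : H) (hg : IsGrouplike k H g) (n : ℕ) :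
    smulTpow k H g (n + 1) ∘ₗ cobar k H h₁ h₂ n =
      cobar k H (g * h₁) (g * h₂) n ∘ₗ smulTpow k H g n := by
  have e1 := LinearMap.ext_iff.mp (smulTpow_gLeft k H g h₁ n)
  have e2 := LinearMap.ext_iff.mp (smulTpow_Dmap k H g hg n)
  have e3 := LinearMap.ext_iff.mp (smulTpow_hRight k H g h₂ n)
  ext x
  simp only [LinearMap.comp_apply] at e1 e2 e3 ⊢
  simp only [cobar, LinearMap.add_apply, LinearMap.sub_apply, LinearMap.smul_apply,
    map_add, map_sub, map_zsmul, e1, e2, e3]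

lemma smulTpow_one' : ∀ n : ℕ, smulTpow k H (1 : H) n = LinearMap.id
  | 0 => rfl
  | n + 1 => by
    show TensorProduct.map _ _ = _
    rw [smulTpow_one' n, LinearMap.mulLeft_one, TensorProduct.map_id]
    rfl

lemma smulTpow_mul' (a b : H) : ∀ n : ℕ,
    smulTpow k H (a * b) n = smulTpow k H a n ∘ₗ smulTpow k H b n
  | 0 => rfl
  | n + 1 => by
    show TensorProduct.map _ _ = _
    rw [smulTpow_mul' a b n, LinearMap.mulLeft_mul, TensorProduct.map_comp]
    rfl

lemma grouplike_antipode_mul (g : H) (hg : IsGrouplike k H g) :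
    HopfAlgebra.antipode (R := k) g * g = 1 := by
  have h := HopfAlgebra.mul_antipode_rTensor_comul_apply (R := k) (a := g)
  rw [hg.1, hg.2] at h
  simpa using h

lemma grouplike_mul_antipode (g : H) (hg : IsGrouplike k H g) :
    g * HopfAlgebra.antipode (R := k) g = 1 := by
  have h := HopfAlgebra.mul_antipode_lTensor_comul_apply (R := k) (a := g)
  rw [hg.1, hg.2] at h
  simpa using h

/-- `smulTpow` by a grouplike element as a linear equivalence. -/
noncomputable def smulTpowEquiv (g : H) (hg : IsGrouplike k H g) (n : ℕ) :
    Tpow k H n ≃ₗ[k] Tpow k H n :=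
  LinearEquiv.ofLinear (smulTpow k H g n) (smulTpow k H (HopfAlgebra.antipode (R := k) g) n)
    (by rw [← smulTpow_mul', grouplike_mul_antipode k H g hg, smulTpow_one'])
    (by rw [← smulTpow_mul', grouplike_antipode_mul k H g hg, smulTpow_one'])

@[simp] lemma smulTpowEquiv_apply (g : H) (hg : IsGrouplike k H g) (n : ℕ) (x : Tpow k H n) :
    smulTpowEquiv k H g hg n x = smulTpow k H g n x := rfl

/-- **Statement 10** (Lemma 3.4).
For grouplike `h₁, h₂, g` in a Hopf algebra `H`, left multiplication by `g^{⊗ n}`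
commutes with the differentials and induces an isomorphism
`𝔓^n_{h₁,h₂}(H) ≅ 𝔓^n_{g h₁, g h₂}(H)`. -/
theorem translation_iso_primCoh
    (h₁ h₂ g : H) (hh₁ : IsGrouplike k H h₁) (hh₂ : IsGrouplike k H h₂)
    (hg : IsGrouplike k H g) (n : ℕ) :
    (smulTpow k H g (n + 1)) ∘ₗ (cobar k H h₁ h₂ n) =
        (cobar k H (g * h₁) (g * h₂) n) ∘ₗ (smulTpow k H g n) ∧
    Nonempty ((PrimCoh k H h₁ h₂ n) ≃ₗ[k] (PrimCoh k H (g * h₁) (g * h₂) n)) := by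
  refine ⟨smulTpow_cobar k H h₁ h₂ g hg n, ?_⟩
  set E : ∀ m : ℕ, Tpow k H m ≃ₗ[k] Tpow k H m := fun m => smulTpowEquiv k H g hg m with hE
  have hc : ∀ (m : ℕ) (x : Tpow k H m),
      cobar k H (g * h₁) (g * h₂) m (smulTpow k H g m x) =
        smulTpow k H g (m + 1) (cobar k H h₁ h₂ m x) :=
    fun m x => (LinearMap.congr_fun (smulTpow_cobar k H h₁ h₂ g hg m) x).symm
  have hZ : (Zc k H h₁ h₂ n).map ((E n : Tpow k H n →ₗ[k] Tpow k H n)) =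
      Zc k H (g * h₁) (g * h₂) n := by
    ext y
    simp only [Submodule.mem_map, Zc, LinearMap.mem_ker, LinearEquiv.coe_coe]
    constructor
    · rintro ⟨x, hx, rfl⟩
      show cobar k H (g * h₁) (g * h₂) n (smulTpow k H g n x) = 0
      rw [hc n x, hx, map_zero]
    · intro hy
      refine ⟨(E n).symm y, ?_, (E n).apply_symm_apply y⟩
      have hsy : smulTpow k H g n ((E n).symm y) = y := (E n).apply_symm_apply y
      have h0 : (E (n + 1)) (cobar k H h₁ h₂ n ((E n).symm y)) = 0 := by
        show smulTpow k H g (n + 1) (cobar k H h₁ h₂ n ((E n).symm y)) = 0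
        rw [← hc n ((E n).symm y), hsy, hy]
      exact (E (n + 1)).map_eq_zero_iff.mp h0
  have hB : (Bc k H h₁ h₂ n).map ((E n : Tpow k H n →ₗ[k] Tpow k H n)) =
      Bc k H (g * h₁) (g * h₂) n := by
    cases n with
    | zero => simp [Bc]
    | succ m =>
      ext y
      simp only [Bc, Submodule.mem_map, LinearMap.mem_range, LinearEquiv.coe_coe]
      constructor
      · rintro ⟨x, ⟨w, rfl⟩, rfl⟩
        exact ⟨smulTpow k H g m w, hc m w⟩
      · rintro ⟨w, rfl⟩
        refine ⟨cobar k H h₁ h₂ m ((E m).symm w), ⟨(E m).symm w, rfl⟩, ?_⟩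
        have hsy : smulTpow k H g m ((E m).symm w) = w := (E m).apply_symm_apply w
        show smulTpow k H g (m + 1) (cobar k H h₁ h₂ m ((E m).symm w)) =
          cobar k H (g * h₁) (g * h₂) m w
        rw [← hc m ((E m).symm w), hsy]
  refine ⟨Submodule.Quotient.equiv _ _ ((E n).ofSubmodules _ _ hZ) ?_⟩
  ext y
  simp only [Submodule.mem_map, Submodule.mem_comap, Submodule.coe_subtype]
  constructor
  · rintro ⟨x, hx, rfl⟩
    show (E n) (x : Tpow k H n) ∈ Bc k H (g * h₁) (g * h₂) n
    rw [← hB]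
    exact Submodule.mem_map_of_mem hx
  · intro hy
    refine ⟨((E n).ofSubmodules _ _ hZ).symm y, ?_,
      ((E n).ofSubmodules _ _ hZ).apply_symm_apply y⟩
    rw [(E n).ofSubmodules_symm_apply hZ y]
    rw [← hB] at hy
    obtain ⟨b, hb, hby⟩ := hy
    have : (E n).symm (y : Tpow k H n) = b := by
      rw [← hby]
      exact (E n).symm_apply_apply b
    rwa [this]

end Translation

end PrimCohPaper
end
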